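/- Let V be an oriented 4-dimensional real inner product space, J a self-dual orthogonal complex structure on V with associated 2-form ω(x,y) = ⟨Jx, y⟩, and let (u,v) be an orthonormal pair in V. Set η = ω(u,v). Then there exists a positively oriented orthonormal basis (e₁,e₂,e₃,e₄) of V with e₁ = u and e₂ = v such that the matrix (ω(e_A,e_B))_{A,B=1,...,4} equals [[0, η, √(1−η²), 0], [−η, 0, 0, −√(1−η²)], [−√(1−η²), 0, 0, η], [0, √(1−η²), −η, 0]]. -/

import Mathlib

open scoped RealInnerProductSpace


theorem skew_aux' {V : Type*} [NormedAddCommGroup V] [InnerProductSpace ℝ V]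
    (J : V →ₗ[ℝ] V) (hJ2 : ∀ x : V, J (J x) = -x) (hJo : ∀ x y : V, ⟪J x, J y⟫ = ⟪x, y⟫) :
    ∀ x y : V, ⟪J x, y⟫ = -⟪J y, x⟫ := by
  intro x y
  have h1 := hJo x (J y)
  rw [hJ2, inner_neg_right] at h1
  have h2 : ⟪x, J y⟫ = ⟪J y, x⟫ := real_inner_comm _ _
  linarith

theorem diag_aux' {V : Type*} [NormedAddCommGroup V] [InnerProductSpace ℝ V]
    (J : V →ₗ[ℝ] V) (hJ2 : ∀ x : V, J (J x) = -x) (hJo : ∀ x y : V, ⟪J x, J y⟫ = ⟪x, y⟫) :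
    ∀ x : V, ⟪J x, x⟫ = 0 := by
  intro x; have := skew_aux' J hJ2 hJo x x; linarith

theorem matrix_entries_aux {V : Type*} [NormedAddCommGroup V] [InnerProductSpace ℝ V]
    (J : V →ₗ[ℝ] V) (hJ2 : ∀ x : V, J (J x) = -x) (hJo : ∀ x y : V, ⟪J x, J y⟫ = ⟪x, y⟫)
    (e : Fin 4 → V) (η s : ℝ)
    (H01 : ⟪J (e 0), e 1⟫ = η) (H02 : ⟪J (e 0), e 2⟫ = s) (H03 : ⟪J (e 0), e 3⟫ = 0)
    (H12 : ⟪J (e 1), e 2⟫ = 0) (H13 : ⟪J (e 1), e 3⟫ = -s) (H23 : ⟪J (e 2), e 3⟫ = η) :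
    ∀ A B : Fin 4, ⟪J (e A), e B⟫ =
      !![0, η, s, 0; -η, 0, 0, -s; -s, 0, 0, η; 0, s, -η, 0] A B := by
  have hskew := skew_aux' J hJ2 hJo
  have hdiag := diag_aux' J hJ2 hJo
  intro A B
  fin_cases A <;> fin_cases B
  · exact hdiag _
  · exact H01
  · exact H02
  · exact H03
  · show ⟪J (e 1), e 0⟫ = -η
    rw [hskew, H01]
  · exact hdiag _
  · exact H12
  · exact H13
  · show ⟪J (e 2), e 0⟫ = -s
    rw [hskew, H02]
  · show ⟪J (e 2), e 1⟫ = (0 : ℝ)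
    rw [hskew, H12]; ring
  · exact hdiag _
  · exact H23
  · show ⟪J (e 3), e 0⟫ = (0 : ℝ)
    rw [hskew, H03]; ring
  · show ⟪J (e 3), e 1⟫ = s
    rw [hskew, H13]; ring
  · show ⟪J (e 3), e 2⟫ = -η
    rw [hskew, H23]
  · exact hdiag _

theorem onb_family_aux {V : Type*} [NormedAddCommGroup V] [InnerProductSpace ℝ V]
    (hdim : Module.finrank ℝ V = 4) (o : Orientation ℝ V (Fin 4))
    (f : Fin 4 → V) (hf : Orthonormal ℝ f) :
    ∃ ε : ℝ, (ε = 1 ∨ ε = -1) ∧ ∃ E : OrthonormalBasis (Fin 4) ℝ V,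
      E.toBasis.orientation = o ∧ E 0 = f 0 ∧ E 1 = f 1 ∧ E 2 = f 2 ∧ E 3 = ε • f 3 := by
  have hcard : Fintype.card (Fin 4) = Module.finrank ℝ V := by simp [hdim]
  set B := basisOfLinearIndependentOfCardEqFinrank hf.linearIndependent hcard with hBdef
  have hB : ⇑B = f := coe_basisOfLinearIndependentOfCardEqFinrank _ _
  have hfB : Orthonormal ℝ ⇑B := by rwa [hB]
  rcases B.orientation_eq_or_eq_neg o with h | h
  · refine ⟨1, Or.inl rfl, B.toOrthonormalBasis hfB, ?_, ?_, ?_, ?_, ?_⟩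
    · rw [Module.Basis.toBasis_toOrthonormalBasis, ← h]
    · rw [show (B.toOrthonormalBasis hfB) 0 = B 0 from congrFun (Module.Basis.coe_toOrthonormalBasis B hfB) 0, hB]
    · rw [show (B.toOrthonormalBasis hfB) 1 = B 1 from congrFun (Module.Basis.coe_toOrthonormalBasis B hfB) 1, hB]
    · rw [show (B.toOrthonormalBasis hfB) 2 = B 2 from congrFun (Module.Basis.coe_toOrthonormalBasis B hfB) 2, hB]
    · rw [show (B.toOrthonormalBasis hfB) 3 = B 3 from congrFun (Module.Basis.coe_toOrthonormalBasis B hfB) 3, hB,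
        one_smul]
  · set w : Fin 4 → ℝˣ := Function.update 1 3 (-1) with hwdef
    set B' := B.unitsSMul w with hB'def
    have hw : ∀ i, w i = if i = 3 then (-1 : ℝˣ) else 1 := by
      intro i
      by_cases hi : i = 3 <;> simp [hwdef, hi]
    have hB'app : ∀ i, B' i = (if i = 3 then (-1:ℝ) else 1) • f i := by
      intro i
      rw [hB'def, Module.Basis.unitsSMul_apply, hw i, ← hB]
      split <;> simp
    have hB'on : Orthonormal ℝ ⇑B' := by
      rw [orthonormal_iff_ite]
      intro i j
      have hfij := orthonormal_iff_ite.mp hf i j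
      rw [hB'app i, hB'app j, real_inner_smul_left, real_inner_smul_right, hfij]
      by_cases hij : i = j
      · subst hij; split <;> simp
      · simp [hij]
    have hor : B'.orientation = -B.orientation := by
      rw [hB'def, hwdef]
      exact B.orientation_neg_single 3
    refine ⟨-1, Or.inr rfl, B'.toOrthonormalBasis hB'on, ?_, ?_, ?_, ?_, ?_⟩
    · rw [Module.Basis.toBasis_toOrthonormalBasis, hor, ← h]
    · rw [show (B'.toOrthonormalBasis hB'on) 0 = B' 0 from
        congrFun (Module.Basis.coe_toOrthonormalBasis B' hB'on) 0, hB'app]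
      rw [if_neg (by decide), one_smul]
    · rw [show (B'.toOrthonormalBasis hB'on) 1 = B' 1 from
        congrFun (Module.Basis.coe_toOrthonormalBasis B' hB'on) 1, hB'app]
      rw [if_neg (by decide), one_smul]
    · rw [show (B'.toOrthonormalBasis hB'on) 2 = B' 2 from
        congrFun (Module.Basis.coe_toOrthonormalBasis B' hB'on) 2, hB'app]
      rw [if_neg (by decide), one_smul]
    · rw [show (B'.toOrthonormalBasis hB'on) 3 = B' 3 from
        congrFun (Module.Basis.coe_toOrthonormalBasis B' hB'on) 3, hB'app]
      rw [if_pos rfl]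


set_option maxHeartbeats 1000000 in
/-- Given a self-dual orthogonal complex structure `J` with Kähler form `ω(x,y) = ⟪Jx,y⟫`
on an oriented 4-dimensional real inner product space and an orthonormal pair `(u,v)`
with `η = ω(u,v)`, there is a positively oriented orthonormal basis `(e₁,e₂,e₃,e₄)` with
`e₁ = u`, `e₂ = v` in which `ω` takes the standard matrix form determined by `η`. -/
theorem selfdual_form_normal_matrix
    {V : Type*} [NormedAddCommGroup V] [InnerProductSpace ℝ V]
    (hdim : Module.finrank ℝ V = 4)
    (o : Orientation ℝ V (Fin 4))
    (J : V →ₗ[ℝ] V)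
    (hJ2 : ∀ x : V, J (J x) = -x) (hJo : ∀ x y : V, ⟪J x, J y⟫ = ⟪x, y⟫)
    (hJsd : ∀ e : OrthonormalBasis (Fin 4) ℝ V, e.toBasis.orientation = o →
      ⟪J (e 0), e 1⟫ * ⟪J (e 2), e 3⟫ - ⟪J (e 0), e 2⟫ * ⟪J (e 1), e 3⟫ +
        ⟪J (e 0), e 3⟫ * ⟪J (e 1), e 2⟫ = 1)
    (u v : V) (hu : ‖u‖ = 1) (hv : ‖v‖ = 1) (huv : ⟪u, v⟫ = 0)
    (η : ℝ) (hη : η = ⟪J u, v⟫) :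
    ∃ e : OrthonormalBasis (Fin 4) ℝ V, e.toBasis.orientation = o ∧
      e 0 = u ∧ e 1 = v ∧
      ∀ A B : Fin 4, ⟪J (e A), e B⟫ =
        !![0, η, Real.sqrt (1 - η ^ 2), 0;
           -η, 0, 0, -Real.sqrt (1 - η ^ 2);
           -Real.sqrt (1 - η ^ 2), 0, 0, η;
           0, Real.sqrt (1 - η ^ 2), -η, 0] A B := by
  haveI : FiniteDimensional ℝ V := .of_finrank_eq_succ hdim
  have hskew := skew_aux' J hJ2 hJo
  have hdiag := diag_aux' J hJ2 hJo
  have huu : ⟪u, u⟫ = 1 := by rw [real_inner_self_eq_norm_mul_norm, hu]; norm_num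
  have hvv : ⟪v, v⟫ = 1 := by rw [real_inner_self_eq_norm_mul_norm, hv]; norm_num
  have hvu : ⟪v, u⟫ = 0 := by rw [real_inner_comm]; exact huv
  have hJuJu : ⟪J u, J u⟫ = 1 := by rw [hJo]; exact huu
  have hJunorm : ‖J u‖ = 1 := by
    have h1 := real_inner_self_eq_norm_mul_norm (J u)
    nlinarith [norm_nonneg (J u)]
  have hη1 : η ^ 2 ≤ 1 := by
    have h1 := abs_real_inner_le_norm (J u) v
    rw [hJunorm, hv] at h1
    rw [hη]
    nlinarith [sq_abs (⟪J u, v⟫ : ℝ), abs_nonneg (⟪J u, v⟫ : ℝ)]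
  set s : ℝ := Real.sqrt (1 - η ^ 2) with hsdef
  have hs2 : s ^ 2 = 1 - η ^ 2 := Real.sq_sqrt (by linarith)
  have hsnn : 0 ≤ s := Real.sqrt_nonneg _
  have hvJu : ⟪v, J u⟫ = η := by rw [real_inner_comm, ← hη]
  have huJu : ⟪u, J u⟫ = 0 := by rw [real_inner_comm]; exact hdiag u
  by_cases hgen : 1 - η ^ 2 = 0
  · -- degenerate case : η² = 1
    have hη2 : η ^ 2 = 1 := by linarith
    have hηη : η * η = 1 := by nlinarith
    have hseq0 : s = 0 := by rw [hsdef, hgen, Real.sqrt_zero]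
    have hJu_v : J u = η • v := by
      have h0 : ⟪J u - η • v, J u - η • v⟫ = 0 := by
        simp only [inner_sub_left, inner_sub_right, real_inner_smul_left, real_inner_smul_right,
          hJuJu, hvv, hvJu, ← hη]
        nlinarith
      have h1 : J u - η • v = 0 := by rwa [inner_self_eq_zero] at h0
      exact sub_eq_zero.mp h1
    have hJv_u : J v = -(η • u) := by
      have h1 : η • J v = -u := by rw [← map_smul, ← hJu_v, hJ2]
      calc J v = (η * η) • J v := by rw [hηη, one_smul]
      _ = η • (η • J v) := by rw [smul_smul]
      _ = η • (-u) := by rw [h1]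
      _ = -(η • u) := by rw [smul_neg]
    have horth : Orthonormal ℝ (Set.restrict {0, 1} ![u, v, 0, (0 : V)]) := by
      rw [orthonormal_iff_ite]
      rintro ⟨i, hi⟩ ⟨j, hj⟩
      simp only [Set.mem_insert_iff, Set.mem_singleton_iff] at hi hj
      simp only [Set.restrict_apply, Subtype.mk.injEq]
      rcases hi with rfl | rfl <;> rcases hj with rfl | rfl <;>
        simp [Set.restrict, huu, hvv, huv, hvu, -inner_self_eq_norm_sq_to_K]
    obtain ⟨b, hb⟩ := Orthonormal.exists_orthonormalBasis_extension_of_card_eq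
      (𝕜 := ℝ) (by simp [hdim]) horth
    have hb0 : b 0 = u := by simpa using hb 0 (by simp)
    have hb1 : b 1 = v := by simpa using hb 1 (by simp)
    have huc : ⟪u, b 2⟫ = 0 := by
      have h := orthonormal_iff_ite.mp b.orthonormal 0 2
      rw [hb0] at h; simpa using h
    have hvc : ⟪v, b 2⟫ = 0 := by
      have h := orthonormal_iff_ite.mp b.orthonormal 1 2
      rw [hb1] at h; simpa using h
    have hcc : ⟪(b 2 : V), b 2⟫ = 1 := by
      have h := orthonormal_iff_ite.mp b.orthonormal 2 2
      simpa using h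
    have hcu : ⟪(b 2 : V), u⟫ = 0 := by rw [real_inner_comm]; exact huc
    have hcv : ⟪(b 2 : V), v⟫ = 0 := by rw [real_inner_comm]; exact hvc
    have hJcJc : ⟪J (b 2), J (b 2)⟫ = 1 := by rw [hJo]; exact hcc
    have hJub2 : ⟪J u, b 2⟫ = 0 := by rw [hJu_v, real_inner_smul_left, hvc]; ring
    have hJvb2 : ⟪J v, b 2⟫ = 0 := by
      rw [hJv_u, inner_neg_left, real_inner_smul_left, huc]; ring
    have huJc : ⟪u, J (b 2)⟫ = 0 := by rw [real_inner_comm, hskew, hJub2]; ring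
    have hvJc : ⟪v, J (b 2)⟫ = 0 := by rw [real_inner_comm, hskew, hJvb2]; ring
    have hcJc : ⟪(b 2 : V), J (b 2)⟫ = 0 := by rw [real_inner_comm]; exact hdiag _
    have hJcu : ⟪J (b 2), u⟫ = 0 := by rw [real_inner_comm]; exact huJc
    have hJcv : ⟪J (b 2), v⟫ = 0 := by rw [real_inner_comm]; exact hvJc
    have hJcc : ⟪J (b 2), b 2⟫ = 0 := hdiag _
    have hg : Orthonormal ℝ ![u, v, b 2, η • J (b 2)] := by
      rw [orthonormal_iff_ite]
      intro i j
      fin_cases i <;> fin_cases j <;>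
        simp [real_inner_smul_left, real_inner_smul_right, huu, hvv, hcc, huv, hvu, huc, hvc,
          hcu, hcv, huJc, hvJc, hcJc, hJcu, hJcv, hJcc, hJcJc, hηη, -inner_self_eq_norm_sq_to_K]
    obtain ⟨ε, hε, E, hEor, hE0, hE1, hE2, hE3⟩ := onb_family_aux hdim o _ hg
    have hE0' : E 0 = u := by simpa using hE0
    have hE1' : E 1 = v := by simpa using hE1
    have hE2' : E 2 = b 2 := by simpa using hE2
    have hE3' : E 3 = ε • η • J (b 2) := by simpa using hE3
    have hJvJc : ⟪J v, J (b 2)⟫ = 0 := by rw [hJo]; exact hvc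
    have hJuJc : ⟪J u, J (b 2)⟫ = 0 := by rw [hJo]; exact huc
    have hsd := hJsd E hEor
    simp only [hE0', hE1', hE2', hE3', real_inner_smul_right, hJub2, hJvb2, hJcJc,
      hJvJc, hJuJc, ← hη, mul_zero, zero_mul, mul_one, sub_zero, add_zero] at hsd
    have hε1 : ε = 1 := by
      rcases hε with h | h
      · exact h
      · rw [h] at hsd; nlinarith [hη2]
    rw [hε1, one_smul] at hE3'
    have H01 : ⟪J (E 0), E 1⟫ = η := by rw [hE0', hE1', ← hη]
    have H02 : ⟪J (E 0), E 2⟫ = s := by rw [hE0', hE2', hJub2, hseq0]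
    have H03 : ⟪J (E 0), E 3⟫ = 0 := by
      rw [hE0', hE3', real_inner_smul_right, hJuJc]; ring
    have H12 : ⟪J (E 1), E 2⟫ = 0 := by rw [hE1', hE2', hJvb2]
    have H13 : ⟪J (E 1), E 3⟫ = -s := by
      rw [hE1', hE3', real_inner_smul_right, hJvJc, hseq0]; ring
    have H23 : ⟪J (E 2), E 3⟫ = η := by
      rw [hE2', hE3', real_inner_smul_right, hJcJc]; ring
    exact ⟨E, hEor, hE0', hE1', matrix_entries_aux J hJ2 hJo ⇑E η s H01 H02 H03 H12 H13 H23⟩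
  · -- generic case
    have hspos : 0 < s := Real.sqrt_pos.mpr (lt_of_le_of_ne (by linarith) (Ne.symm hgen))
    have hsne : s ≠ 0 := ne_of_gt hspos
    set e₂ : V := s⁻¹ • (J u - η • v) with he2def
    have hue2 : ⟪u, e₂⟫ = 0 := by
      rw [he2def, real_inner_smul_right, inner_sub_right, real_inner_smul_right, huJu, huv]; ring
    have hve2 : ⟪v, e₂⟫ = 0 := by
      rw [he2def, real_inner_smul_right, inner_sub_right, real_inner_smul_right, hvJu, hvv]; ring
    have he2u : ⟪e₂, u⟫ = 0 := by rw [real_inner_comm]; exact hue2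
    have he2v : ⟪e₂, v⟫ = 0 := by rw [real_inner_comm]; exact hve2
    have he2e2 : ⟪e₂, e₂⟫ = 1 := by
      rw [he2def]
      simp only [inner_sub_left, inner_sub_right, real_inner_smul_left, real_inner_smul_right,
        hJuJu, hvv, hvJu, huJu, ← hη]
      field_simp
      nlinarith [hs2]
    have horth : Orthonormal ℝ (Set.restrict {0, 1, 2} ![u, v, e₂, (0 : V)]) := by
      rw [orthonormal_iff_ite]
      rintro ⟨i, hi⟩ ⟨j, hj⟩
      simp only [Set.mem_insert_iff, Set.mem_singleton_iff] at hi hj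
      simp only [Set.restrict_apply, Subtype.mk.injEq]
      rcases hi with rfl | rfl | rfl <;> rcases hj with rfl | rfl | rfl <;>
        simp [Set.restrict, huu, hvv, he2e2, huv, hvu, hue2, hve2, he2u, he2v, -inner_self_eq_norm_sq_to_K]
    obtain ⟨b, hb⟩ := Orthonormal.exists_orthonormalBasis_extension_of_card_eq
      (𝕜 := ℝ) (by simp [hdim]) horth
    have hb0 : b 0 = u := by simpa using hb 0 (by simp)
    have hb1 : b 1 = v := by simpa using hb 1 (by simp)
    have hb2 : b 2 = e₂ := by simpa using hb 2 (by simp)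
    have hud : ⟪u, b 3⟫ = 0 := by
      have h := orthonormal_iff_ite.mp b.orthonormal 0 3
      rw [hb0] at h; simpa using h
    have hvd : ⟪v, b 3⟫ = 0 := by
      have h := orthonormal_iff_ite.mp b.orthonormal 1 3
      rw [hb1] at h; simpa using h
    have he2d : ⟪e₂, b 3⟫ = 0 := by
      have h := orthonormal_iff_ite.mp b.orthonormal 2 3
      rw [hb2] at h; simpa using h
    have hdd : ⟪(b 3 : V), b 3⟫ = 1 := by
      have h := orthonormal_iff_ite.mp b.orthonormal 3 3
      simpa using h
    have hdu : ⟪(b 3 : V), u⟫ = 0 := by rw [real_inner_comm]; exact hud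
    have hdv : ⟪(b 3 : V), v⟫ = 0 := by rw [real_inner_comm]; exact hvd
    have hde2 : ⟪(b 3 : V), e₂⟫ = 0 := by rw [real_inner_comm]; exact he2d
    have hg : Orthonormal ℝ ![u, v, e₂, b 3] := by
      rw [orthonormal_iff_ite]
      intro i j
      fin_cases i <;> fin_cases j <;>
        simp [huu, hvv, he2e2, hdd, huv, hvu, hue2, hve2, he2u, he2v, hud, hvd, he2d,
          hdu, hdv, hde2, -inner_self_eq_norm_sq_to_K]
    obtain ⟨ε, hε, E, hEor, hE0, hE1, hE2, hE3⟩ := onb_family_aux hdim o _ hg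
    have hE0' : E 0 = u := by simpa using hE0
    have hE1' : E 1 = v := by simpa using hE1
    have hE2' : E 2 = e₂ := by simpa using hE2
    have hue3 : ⟪u, E 3⟫ = 0 := by
      have h := orthonormal_iff_ite.mp E.orthonormal 0 3
      rw [hE0'] at h; simpa using h
    have hve3 : ⟪v, E 3⟫ = 0 := by
      have h := orthonormal_iff_ite.mp E.orthonormal 1 3
      rw [hE1'] at h; simpa using h
    have he2e3 : ⟪e₂, E 3⟫ = 0 := by
      have h := orthonormal_iff_ite.mp E.orthonormal 2 3
      rw [hE2'] at h; simpa using h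
    have hJu_eq : J u = η • v + s • e₂ := by
      rw [he2def, smul_smul, mul_inv_cancel₀ hsne, one_smul]; abel
    set c : ℝ := ⟪J v, E 3⟫ with hcdef
    have hJue2 : ⟪J u, e₂⟫ = s := by
      rw [hJu_eq, inner_add_left, real_inner_smul_left, real_inner_smul_left, hve2, he2e2]; ring
    have hJue3 : ⟪J u, E 3⟫ = 0 := by
      rw [hJu_eq, inner_add_left, real_inner_smul_left, real_inner_smul_left, hve3, he2e3]; ring
    have hJve2 : ⟪J v, e₂⟫ = 0 := by
      rw [he2def, real_inner_smul_right, inner_sub_right, real_inner_smul_right, hJo,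
        hvu, hdiag v]
      ring
    have hJe2 : J e₂ = s⁻¹ • (-u - η • J v) := by
      rw [he2def, map_smul, map_sub, map_smul, hJ2]
    have hJe2E3 : ⟪J e₂, E 3⟫ = s⁻¹ * (-η * c) := by
      rw [hJe2, real_inner_smul_left, inner_sub_left, inner_neg_left, real_inner_smul_left,
        hue3, hcdef]
      ring
    have hsd := hJsd E hEor
    rw [hE0', hE1', hE2', ← hη, hJue2, hJue3, hJve2, hJe2E3, ← hcdef] at hsd
    have hc : c = -s := by
      field_simp at hsd
      nlinarith [hs2]
    have H01 : ⟪J (E 0), E 1⟫ = η := by rw [hE0', hE1', ← hη]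
    have H02 : ⟪J (E 0), E 2⟫ = s := by rw [hE0', hE2', hJue2]
    have H03 : ⟪J (E 0), E 3⟫ = 0 := by rw [hE0', hJue3]
    have H12 : ⟪J (E 1), E 2⟫ = 0 := by rw [hE1', hE2', hJve2]
    have H13 : ⟪J (E 1), E 3⟫ = -s := by rw [hE1', ← hcdef, hc]
    have H23 : ⟪J (E 2), E 3⟫ = η := by
      rw [hE2', hJe2E3, hc]
      field_simp
    exact ⟨E, hEor, hE0', hE1', matrix_entries_aux J hJ2 hJo ⇑E η s H01 H02 H03 H12 H13 H23⟩
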